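/- arXiv:2402.00766 — 3 statements merged into one kernel-verified Lean document; each statement's English description precedes it below -/
import Mathlib

section
/- For a subgraph G' ⊂ G induced by V' ⊂ V, the partial stabilizer projector satisfies P(V',G) = U (|G'⟩⟨G'| ⊗ I) U, where U = ∏_{(i,j)∈Ẽ} CZ^{(i,j)} is the product of controlled-Z gates over the set Ẽ of edges connecting V' to V \ V'. -/
open scoped Classical
open Matrix

noncomputable section

namespace GraphStates

variable {V : Type} [Fintype V] [DecidableEq V]

/-- Matrices acting on the `|V|`-qubit Hilbert space `(ℂ²)^{⊗V}`,
indexed by computational basis states `V → Bool`. -/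
abbrev QMat (V : Type) := Matrix (V → Bool) (V → Bool) ℂ

/-- Pauli `Z` on qubit `i`. -/
def pauliZ (i : V) : QMat V :=
  Matrix.diagonal fun f => if f i then -1 else 1

/-- Pauli `X` on qubit `i`. -/
def pauliX (i : V) : QMat V :=
  Matrix.of fun f g => if f = Function.update g i (!g i) then 1 else 0

/-- Product of Pauli `Z` over a set `s` of qubits. -/
def zOn (s : Finset V) : QMat V :=
  Matrix.diagonal fun f => (-1 : ℂ) ^ (s.filter fun v => f v = true).card

/-- Controlled-`Z` gate on qubits `i`, `j`. -/
def czMat (i j : V) : QMat V :=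
  Matrix.diagonal fun f => if f i = true ∧ f j = true then -1 else 1

/-- The stabilizer generator `S_i = X_i ∏_{j ∈ N_i} Z_j` of the graph state of `G`. -/
def stab (G : SimpleGraph V) (i : V) : QMat V :=
  pauliX i * zOn (Finset.univ.filter fun j => G.Adj i j)

/-- The state `|+⟩^{⊗ V}`. -/
def plusVec : (V → Bool) → ℂ := fun _ => ((Real.sqrt 2 : ℂ))⁻¹ ^ Fintype.card V

/-- The product of the controlled-`Z` gates over all edges of `G`
(a single diagonal matrix, since `CZ` gates are diagonal and commute). -/
def czProd (G : SimpleGraph V) : QMat V :=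
  Matrix.diagonal fun f =>
    (-1 : ℂ) ^ ((Finset.univ : Finset (Sym2 V)).filter fun e =>
        e ∈ G.edgeSet ∧ ∀ v ∈ e, f v = true).card

/-- The graph state `|G⟩ = ∏_{(i,j) ∈ E} CZ^{(i,j)} |+⟩^{⊗n}` as a vector. -/
def graphStateVec (G : SimpleGraph V) : (V → Bool) → ℂ :=
  czProd G *ᵥ plusVec

/-- Outer product `|v⟩⟨v|`. -/
def outer {ι : Type} (v : ι → ℂ) : Matrix ι ι ℂ :=
  Matrix.of fun f g => v f * (starRingEnd ℂ) (v g)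

/-- Product of a family of matrices over a finite set (in a fixed enumeration order). -/
def prodOn (s : Finset V) (f : V → QMat V) : QMat V :=
  (s.toList.map f).prod

/-- The partial stabilizer projector `P(U,G) = ∏_{v ∈ U} (I + S_v)/2`. -/
def stabProj (G : SimpleGraph V) (s : Finset V) : QMat V :=
  prodOn s fun v => (2 : ℂ)⁻¹ • (1 + stab G v)

/-- Combine assignments on `s` and on its complement into a global assignment. -/
def merge (s : Finset V) (a : {v // v ∈ s} → Bool) (b : {v // v ∉ s} → Bool) : V → Bool :=
  fun v => if h : v ∈ s then a ⟨v, h⟩ else b ⟨v, h⟩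

/-- Partial trace onto the qubits in `s` (tracing out the complement). -/
def ptrace (s : Finset V) (ρ : QMat V) :
    Matrix ({v // v ∈ s} → Bool) ({v // v ∈ s} → Bool) ℂ :=
  Matrix.of fun a b => ∑ h : {v // v ∉ s} → Bool, ρ (merge s a h) (merge s b h)

/-- Embed an operator on the qubits in `s` into the full system, tensoring with
the identity on the remaining qubits: `A ↦ A ⊗ I`. -/
def embedOp (s : Finset V)
    (A : Matrix ({v // v ∈ s} → Bool) ({v // v ∈ s} → Bool) ℂ) : QMat V :=
  Matrix.of fun f g =>
    if ∀ v, v ∉ s → f v = g v then A (fun v => f v.1) (fun v => g v.1) else 0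

/-- The subgraph of `G` induced by the vertex subset `s`. -/
def inducedGraph (G : SimpleGraph V) (s : Finset V) : SimpleGraph {v // v ∈ s} :=
  G.comap Subtype.val

/-- The subgraph of `G` induced by the complement of `s`. -/
def inducedGraphC (G : SimpleGraph V) (s : Finset V) : SimpleGraph {v // v ∉ s} :=
  G.comap Subtype.val

/-- The product `U = ∏_{(i,j) ∈ Ẽ} CZ^{(i,j)}` of controlled-`Z` gates over the set `Ẽ`
of edges of `G` having exactly one endpoint in `s`. -/
def czCut (G : SimpleGraph V) (s : Finset V) : QMat V :=
  Matrix.diagonal fun f =>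
    (-1 : ℂ) ^ ((Finset.univ : Finset (Sym2 V)).filter fun e =>
        e ∈ G.edgeSet ∧ (∀ v ∈ e, f v = true) ∧ (∃ v ∈ e, v ∈ s) ∧ (∃ v ∈ e, v ∉ s)).card

/-- Tensor product of an operator on the qubits in `s` with an operator on the
complementary qubits, as an operator on the full system. -/
def tensorSplit (s : Finset V)
    (A : Matrix ({v // v ∈ s} → Bool) ({v // v ∈ s} → Bool) ℂ)
    (B : Matrix ({v // v ∉ s} → Bool) ({v // v ∉ s} → Bool) ℂ) : QMat V :=
  Matrix.of fun f g =>
    A (fun v => f v.1) (fun v => g v.1) * B (fun v => f v.1) (fun v => g v.1)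

/-- `ρ` is a pure state: the outer product of a normalized vector. -/
def IsPure {ι : Type} [Fintype ι] (ρ : Matrix ι ι ℂ) : Prop :=
  ∃ v : ι → ℂ, (∑ x, Complex.normSq (v x)) = 1 ∧ ρ = outer v

/-- `ρ` is separable with respect to the bipartition `(s, sᶜ)` of the qubits:
a probabilistic mixture of tensor products of pure states of the two subsystems. -/
def SeparableWrt (s : Finset V) (ρ : QMat V) : Prop :=
  ∃ (ι : Type) (_ : Fintype ι) (p : ι → ℝ)
    (a : ι → Matrix ({v // v ∈ s} → Bool) ({v // v ∈ s} → Bool) ℂ)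
    (b : ι → Matrix ({v // v ∉ s} → Bool) ({v // v ∉ s} → Bool) ℂ),
    (∀ k, 0 ≤ p k) ∧ (∑ k, p k) = 1 ∧
    (∀ k, IsPure (a k) ∧ IsPure (b k)) ∧
    ρ = ∑ k, (p k : ℂ) • tensorSplit s (a k) (b k)

/-- `ρ` is biseparable: a convex mixture of states, each separable with respect to
some (nontrivial) bipartition of the qubits. -/
def Biseparable (ρ : QMat V) : Prop :=
  ∃ (ι : Type) (_ : Fintype ι) (q : ι → ℝ) (A : ι → Finset V) (σ : ι → QMat V),
    (∀ k, 0 ≤ q k) ∧ (∑ k, q k) = 1 ∧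
    (∀ k, (A k).Nonempty ∧ A k ≠ Finset.univ ∧ SeparableWrt (A k) (σ k)) ∧
    ρ = ∑ k, (q k : ℂ) • σ k

/-- `𝒱` is a partition of the vertex subset `t` into nonempty pairwise disjoint blocks. -/
def IsPartitionOn (t : Finset V) (𝒱 : Finset (Finset V)) : Prop :=
  (∀ B ∈ 𝒱, B.Nonempty) ∧
  ((𝒱 : Set (Finset V)).Pairwise fun B C => Disjoint B C) ∧
  𝒱.sup id = t

/-- The entanglement witness `W(𝒱,G) = (k − 1/2) I − ∑_{B ∈ 𝒱} P(B,G)`. -/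
def witnessW (G : SimpleGraph V) (𝒱 : Finset (Finset V)) : QMat V :=
  ((𝒱.card : ℂ) - 1/2) • 1 - ∑ B ∈ 𝒱, stabProj G B

/-- The white-noise-mixed state `ρ(p) = (1−p) ρ₀ + p I / 2^n`. -/
def whiteNoise (ρ0 : QMat V) (p : ℝ) : QMat V :=
  ((1 - p : ℝ) : ℂ) • ρ0 + ((p : ℂ) / (2 ^ Fintype.card V)) • 1

/-- The element `∏_i S_i^{x_i}` of the stabilizer group of `|G⟩`. -/
def stabElem (G : SimpleGraph V) (x : V → Bool) : QMat V :=
  prodOn (Finset.univ.filter fun i => x i = true) (stab G)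

/-- The stabilizer generator of the induced subgraph `G' = G[s]`, extended by
identity to the full system: `S_i' = X_i ∏_{j ∈ N_i ∩ s} Z_j`. -/
def subStab (G : SimpleGraph V) (s : Finset V) (i : V) : QMat V :=
  pauliX i * zOn ((Finset.univ.filter fun j => G.Adj i j) ∩ s)


open Finset

/-- sign character of a proposition -/
def chi (p : Prop) : ℂ := if p then -1 else 1

lemma chi_congr {p q : Prop} (h : p ↔ q) : chi p = chi q := by
  simp only [chi]; by_cases hp : p
  · rw [if_pos hp, if_pos (h.1 hp)]
  · rw [if_neg hp, if_neg (fun hq => hp (h.2 hq))]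

lemma chi_of_false {p : Prop} (h : ¬ p) : chi p = 1 := by simp [chi, h]

lemma chi_mul (p q : Prop) : chi p * chi q = chi (¬(p ↔ q)) := by
  by_cases hp : p <;> by_cases hq : q <;> simp [chi, hp, hq]

lemma neg_one_pow_filter {α : Type*} (s : Finset α) (P : α → Prop) [DecidablePred P] :
    ((-1 : ℂ)) ^ (s.filter P).card = ∏ x ∈ s, chi (P x) := by
  induction s using Finset.cons_induction with
  | empty => simp
  | cons a s ha ih =>
    rw [Finset.prod_cons, Finset.filter_cons, ← ih]
    by_cases h : P a
    · rw [if_pos h]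
      have : a ∉ filter P s := fun hm => ha (Finset.mem_filter.1 hm).1
      simp [Finset.card_insert_of_notMem this, h, chi, pow_succ, mul_comm]
    · simp [h, chi]

lemma chi_prod_filter {α : Type*} (s : Finset α) (P Q : α → Prop) [DecidablePred P] :
    (∏ x ∈ s.filter P, chi (Q x)) = ∏ x ∈ s, chi (P x ∧ Q x) := by
  rw [Finset.prod_filter]
  refine Finset.prod_congr rfl fun x _ => ?_
  by_cases h : P x
  · rw [if_pos h]; exact chi_congr (by tauto)
  · rw [if_neg h, chi_of_false (by tauto)]

lemma chi4 (a b c d : Prop) :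
    chi a * chi b * chi c * chi d = chi (¬(¬(a ↔ b) ↔ ¬(c ↔ d))) := by
  by_cases ha : a <;> by_cases hb : b <;> by_cases hc : c <;> by_cases hd : d <;>
    simp [chi, ha, hb, hc, hd]

/-- "edge fully on" predicate -/
def onE (f : V → Bool) (e : Sym2 V) : Prop := ∀ v ∈ e, f v = true

lemma onE_mk (f : V → Bool) (x y : V) : onE f s(x, y) ↔ (f x = true ∧ f y = true) := by
  constructor
  · intro h; exact ⟨h x (by simp), h y (by simp)⟩
  · rintro ⟨h1, h2⟩ v hv
    rcases Sym2.mem_iff.1 hv with rfl | rfl <;> assumption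

lemma forall_mem_mk {x y a : V} (p : V → Prop) :
    (∀ v ∈ s(x, y), v ≠ a → p v) ↔ ((x ≠ a → p x) ∧ (y ≠ a → p y)) := by
  constructor
  · intro h; exact ⟨h x (by simp), h y (by simp)⟩
  · rintro ⟨h1, h2⟩ v hv
    rcases Sym2.mem_iff.1 hv with rfl | rfl <;> assumption

lemma exists_mem_mk {x y : V} (p : V → Prop) :
    (∃ v ∈ s(x, y), p v) ↔ (p x ∨ p y) := by
  constructor
  · rintro ⟨v, hv, hp⟩
    rcases Sym2.mem_iff.1 hv with rfl | rfl
    · exact Or.inl hp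
    · exact Or.inr hp
  · rintro (h | h)
    · exact ⟨x, by simp, h⟩
    · exact ⟨y, by simp, h⟩

lemma ball_mem_mk {x y : V} (p : V → Prop) :
    (∀ v ∈ s(x, y), p v) ↔ (p x ∧ p y) := by
  constructor
  · intro h; exact ⟨h x (by simp), h y (by simp)⟩
  · rintro ⟨h1, h2⟩ v hv
    rcases Sym2.mem_iff.1 hv with rfl | rfl <;> assumption

/-- the common sign appearing in both sides -/
def sgn (G : SimpleGraph V) (f g : V → Bool) : ℂ :=
  ∏ e : Sym2 V, chi (e ∈ G.edgeSet ∧ ¬(onE f e ↔ onE g e))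

lemma sgn_self (G : SimpleGraph V) (f : V → Bool) : sgn G f f = 1 := by
  unfold sgn
  rw [Finset.prod_eq_one]
  intro e _
  exact chi_of_false (by tauto)

lemma stab_apply (G : SimpleGraph V) (a : V) (f g : V → Bool) :
    stab G a f g = (if f = Function.update g a (!g a) then (1:ℂ) else 0) *
      (-1) ^ (((Finset.univ.filter fun j => G.Adj a j).filter fun v => g v = true).card) := by
  simp [stab, pauliX, zOn, Matrix.mul_diagonal]

lemma flip_flip (f : V → Bool) (a : V) :
    Function.update (Function.update f a (!f a)) a (!(Function.update f a (!f a)) a) = f := by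
  funext v
  by_cases h : v = a
  · subst h; simp
  · simp [Function.update_of_ne h]

lemma flip_eq_iff (f h : V → Bool) (a : V) :
    f = Function.update h a (!h a) ↔ h = Function.update f a (!f a) := by
  constructor <;> intro e
  · subst e; exact (flip_flip h a).symm
  · subst e; exact (flip_flip f a).symm

lemma filter_adj_flip (G : SimpleGraph V) (a : V) (f : V → Bool) :
    ((Finset.univ.filter fun j => G.Adj a j).filter fun v =>
        Function.update f a (!f a) v = true).card =
    ((Finset.univ.filter fun j => G.Adj a j).filter fun v => f v = true).card := by
  congr 1
  apply Finset.filter_congr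
  intro v hv
  have hva : v ≠ a := fun e => (G.ne_of_adj (Finset.mem_filter.1 hv).2) e.symm
  rw [Function.update_of_ne hva]

lemma stab_mul_apply (G : SimpleGraph V) (a : V) (B : QMat V) (f g : V → Bool) :
    (stab G a * B) f g =
      (-1) ^ (((Finset.univ.filter fun j => G.Adj a j).filter fun v => f v = true).card) *
        B (Function.update f a (!f a)) g := by
  rw [Matrix.mul_apply]
  have : ∀ h : V → Bool, stab G a f h * B h g =
      if h = Function.update f a (!f a) then
        ((-1:ℂ) ^ (((Finset.univ.filter fun j => G.Adj a j).filter
          fun v => h v = true).card) * B h g) else 0 := by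
    intro h
    rw [stab_apply]
    by_cases hh : h = Function.update f a (!f a)
    · rw [if_pos hh, if_pos ((flip_eq_iff f h a).2 hh), one_mul]
    · rw [if_neg hh, if_neg (fun e => hh ((flip_eq_iff f h a).1 e)), zero_mul, zero_mul]
  rw [Finset.sum_congr rfl fun h _ => this h, Finset.sum_ite_eq' Finset.univ]
  simp [filter_adj_flip]

lemma vertex_to_edge (G : SimpleGraph V) (a : V) (p : V → Bool) :
    (∏ v : V, chi (G.Adj a v ∧ p v = true)) =
      ∏ e : Sym2 V, chi (e ∈ G.edgeSet ∧ a ∈ e ∧ ∀ v ∈ e, v ≠ a → p v = true) := by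
  rw [← chi_prod_filter Finset.univ (fun v => G.Adj a v) (fun v => p v = true)]
  have : ∀ e : Sym2 V, chi (e ∈ G.edgeSet ∧ a ∈ e ∧ ∀ v ∈ e, v ≠ a → p v = true)
      = chi ((e ∈ G.edgeSet ∧ a ∈ e) ∧ ∀ v ∈ e, v ≠ a → p v = true) :=
    fun e => chi_congr (by tauto)
  rw [Finset.prod_congr rfl fun e _ => this e,
    ← chi_prod_filter Finset.univ (fun e => e ∈ G.edgeSet ∧ a ∈ e)]
  refine Finset.prod_nbij (fun v => s(a, v)) ?_ ?_ ?_ ?_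
  · intro v hv
    have hadj : G.Adj a v := (Finset.mem_filter.1 hv).2
    simp [SimpleGraph.mem_edgeSet, hadj]
  · intro v hv w hw he
    have hadj : G.Adj a v := (Finset.mem_filter.1 (by exact_mod_cast hv)).2
    rcases Sym2.eq_iff.1 he with ⟨_, h⟩ | ⟨h1, h2⟩
    · exact h
    · exact absurd h2.symm (G.ne_of_adj hadj)
  · rintro e he
    simp only [Finset.coe_filter, Set.mem_setOf_eq] at he
    obtain ⟨-, hE, hae⟩ := he
    induction e using Sym2.ind with
    | _ x y =>
      have hadj : G.Adj x y := (SimpleGraph.mem_edgeSet G).1 hE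
      rcases Sym2.mem_iff.1 hae with rfl | rfl
      · exact ⟨y, by simp [hadj], rfl⟩
      · exact ⟨x, by simp [hadj.symm], Sym2.eq_swap⟩
  · intro v hv
    have hadj : G.Adj a v := (Finset.mem_filter.1 hv).2
    have hva : v ≠ a := fun e => (G.ne_of_adj hadj) e.symm
    refine chi_congr ?_
    rw [forall_mem_mk]
    constructor
    · intro h; exact ⟨fun hne => absurd rfl hne, fun _ => h⟩
    · rintro ⟨-, h2⟩; exact h2 hva

lemma sgn_flip (G : SimpleGraph V) (f g : V → Bool) (a : V) :
    sgn G f g =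
      ((-1 : ℂ)) ^ (((Finset.univ.filter fun j => G.Adj a j).filter
          fun v => f v = true).card) *
        sgn G (Function.update f a (!f a)) g := by
  set f' := Function.update f a (!f a) with hf'
  rw [Finset.filter_filter, neg_one_pow_filter, vertex_to_edge]
  unfold sgn
  rw [← Finset.prod_mul_distrib]
  refine Finset.prod_congr rfl fun e _ => ?_
  rw [chi_mul]
  refine chi_congr ?_
  induction e using Sym2.ind with
  | _ x y =>
    by_cases hE : s(x, y) ∈ G.edgeSet
    · have hadj : G.Adj x y := (SimpleGraph.mem_edgeSet G).1 hE
      have hxy : x ≠ y := G.ne_of_adj hadj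
      simp only [hE, true_and, Sym2.mem_iff, onE_mk, forall_mem_mk]
      by_cases hax : a = x
      · subst hax
        have hya : y ≠ a := fun e => hxy e.symm
        have h1 : f' a = !f a := by rw [hf']; simp
        have h2 : f' y = f y := by rw [hf', Function.update_of_ne hya]
        simp only [h1, h2, hya, ne_eq, not_true_eq_false, false_implies, true_and,
          eq_self_iff_true, or_true, true_or]
        constructor
        · intro h
          cases hfa : f a <;> cases hfy : f y <;> cases hga : g a <;> cases hgy : g y <;>
            simp_all
        · intro h
          cases hfa : f a <;> cases hfy : f y <;> cases hga : g a <;> cases hgy : g y <;>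
            simp_all
      · by_cases hay : a = y
        · subst hay
          have h1 : f' a = !f a := by rw [hf']; simp
          have h2 : f' x = f x := by rw [hf', Function.update_of_ne (fun e => hax e.symm)]
          simp only [h1, h2, hax, ne_eq, not_true_eq_false, false_implies, true_and,
            eq_self_iff_true, or_true, true_or]
          constructor
          · intro h
            cases hfa : f a <;> cases hfx : f x <;> cases hga : g a <;> cases hgx : g x <;>
              simp_all
          · intro h
            cases hfa : f a <;> cases hfx : f x <;> cases hga : g a <;> cases hgx : g x <;>
              simp_all
        · have h1 : f' x = f x := by rw [hf', Function.update_of_ne (fun e => hax e.symm)]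
          have h2 : f' y = f y := by rw [hf', Function.update_of_ne (fun e => hay e.symm)]
          have hmem : ¬ (a = x ∨ a = y) := by tauto
          simp only [h1, h2, hmem, false_and, and_false]
          tauto
    · have : ¬ (s(x,y) ∈ G.edgeSet ∧ a ∈ s(x,y) ∧ ∀ v ∈ s(x,y), v ≠ a → f v = true) := by
        tauto
      simp only [hE, false_and, this]
      tauto

lemma prod_list_eq (G : SimpleGraph V) :
    ∀ L : List V, L.Nodup →
      (L.map fun v => (2:ℂ)⁻¹ • (1 + stab G v)).prod =
        Matrix.of fun f g =>
          if ∀ v, v ∉ L → f v = g v then (2:ℂ)⁻¹ ^ L.length * sgn G f g else 0 := by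
  intro L
  induction L with
  | nil =>
    intro _
    ext f g
    by_cases hfg : f = g
    · subst hfg
      simp [Matrix.one_apply, sgn_self]
    · have : ¬ ∀ v, f v = g v := fun h => hfg (funext h)
      simp [Matrix.one_apply, hfg, this]
  | cons a L ih =>
    intro hnd
    rw [List.nodup_cons] at hnd
    obtain ⟨haL, hLnd⟩ := hnd
    rw [List.map_cons, List.prod_cons, ih hLnd]
    ext f g
    rw [Matrix.smul_mul, Matrix.smul_apply, Matrix.add_mul, Matrix.one_mul,
      Matrix.add_apply, stab_mul_apply]
    set f' := Function.update f a (!f a) with hf'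
    have hfa' : f' a = !f a := by rw [hf']; simp
    have hfv' : ∀ v, v ≠ a → f' v = f v := fun v hv => by
      rw [hf', Function.update_of_ne hv]
    by_cases hfg : f a = g a
    · have h2 : ¬ ∀ v, v ∉ L → f' v = g v := by
        intro h
        have := h a haL
        rw [hfa', ← hfg] at this
        exact (Bool.not_ne_self (f a)) (this)
      have hcond : (∀ v, v ∉ L → f v = g v) ↔ (∀ v, v ∉ (a :: L) → f v = g v) := by
        constructor
        · intro h v hv
          exact h v (fun hm => hv (List.mem_cons_of_mem a hm))
        · intro h v hv
          by_cases hva : v = a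
          · subst hva; exact hfg
          · exact h v (by simp [hva, hv])
      simp only [Matrix.of_apply, if_neg h2, mul_zero, add_zero]
      by_cases hc : ∀ v, v ∉ (a :: L) → f v = g v
      · rw [if_pos (hcond.2 hc), if_pos hc]
        simp [List.length_cons, pow_succ]
        ring
      · rw [if_neg (fun h => hc (hcond.1 h)), if_neg hc]
        exact smul_zero _
    · have h1 : ¬ ∀ v, v ∉ L → f v = g v := fun h => hfg (h a haL)
      have hcond : (∀ v, v ∉ L → f' v = g v) ↔ (∀ v, v ∉ (a :: L) → f v = g v) := by
        constructor
        · intro h v hv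
          have hva : v ≠ a := fun e => hv (e ▸ List.mem_cons_self (a := a) (l := L))
          rw [← hfv' v hva]
          exact h v (fun hm => hv (List.mem_cons_of_mem a hm))
        · intro h v hv
          by_cases hva : v = a
          · rw [hva, hfa']
            revert hfg
            cases g a <;> cases f a <;> simp
          · rw [hfv' v hva]
            exact h v (by simp [hva, hv])
      simp only [Matrix.of_apply, if_neg h1, zero_add]
      by_cases hc : ∀ v, v ∉ (a :: L) → f v = g v
      · rw [if_pos (hcond.2 hc), if_pos hc]
        rw [sgn_flip G f g a, ← hf']
        simp [List.length_cons, pow_succ]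
        ring
      · rw [if_neg (fun h => hc (hcond.1 h)), if_neg hc]
        simp

lemma induced_pow_eq_prod (G : SimpleGraph V) (s : Finset V) (f : V → Bool) :
    ((-1 : ℂ)) ^ (((Finset.univ : Finset (Sym2 {v // v ∈ s})).filter fun e =>
        e ∈ (inducedGraph G s).edgeSet ∧ ∀ v ∈ e, f v.1 = true).card) =
      ∏ e : Sym2 V, chi (e ∈ G.edgeSet ∧ (∀ v ∈ e, v ∈ s) ∧ onE f e) := by
  rw [neg_one_pow_filter]
  have : ∀ e : Sym2 V, chi (e ∈ G.edgeSet ∧ (∀ v ∈ e, v ∈ s) ∧ onE f e)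
      = chi ((∀ v ∈ e, v ∈ s) ∧ (e ∈ G.edgeSet ∧ onE f e)) := fun e => chi_congr (by tauto)
  rw [Finset.prod_congr rfl fun e _ => this e,
    ← chi_prod_filter Finset.univ (fun e : Sym2 V => ∀ v ∈ e, v ∈ s)]
  refine Finset.prod_nbij (Sym2.map Subtype.val) ?_ ?_ ?_ ?_
  · intro e' _
    induction e' using Sym2.ind with
    | _ x y => simp [Sym2.mem_iff, x.2, y.2]
  · intro e' _ e'' _ h
    exact Sym2.map.injective Subtype.val_injective h
  · rintro e he
    simp only [Finset.coe_filter, Set.mem_setOf_eq] at he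
    obtain ⟨-, hmem⟩ := he
    induction e using Sym2.ind with
    | _ x y =>
      have hx : x ∈ s := hmem x (by simp)
      have hy : y ∈ s := hmem y (by simp)
      exact ⟨s(⟨x, hx⟩, ⟨y, hy⟩), by simp, by simp [Sym2.map_pair_eq]⟩
  · intro e' _
    induction e' using Sym2.ind with
    | _ x y =>
      rw [Sym2.map_pair_eq]
      refine chi_congr ?_
      have h1 : (s(x, y) ∈ (inducedGraph G s).edgeSet) ↔ s((x:V), (y:V)) ∈ G.edgeSet := by
        simp [inducedGraph, SimpleGraph.mem_edgeSet]
      have h2 : (∀ v ∈ s(x, y), f v.1 = true) ↔ onE f s((x:V), (y:V)) := by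
        rw [onE_mk]
        constructor
        · intro h; exact ⟨h x (by simp), h y (by simp)⟩
        · rintro ⟨hx, hy⟩ v hv
          rcases Sym2.mem_iff.1 hv with rfl | rfl <;> assumption
      rw [h1, h2]

set_option maxHeartbeats 2000000 in
lemma sgn_split (G : SimpleGraph V) (s : Finset V) (f g : V → Bool)
    (hc : ∀ v, v ∉ s → f v = g v) :
    (∏ e : Sym2 V, chi (e ∈ G.edgeSet ∧ onE f e ∧ (∃ v ∈ e, v ∈ s) ∧ (∃ v ∈ e, v ∉ s))) *
    (∏ e : Sym2 V, chi (e ∈ G.edgeSet ∧ (∀ v ∈ e, v ∈ s) ∧ onE f e)) *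
    (∏ e : Sym2 V, chi (e ∈ G.edgeSet ∧ onE g e ∧ (∃ v ∈ e, v ∈ s) ∧ (∃ v ∈ e, v ∉ s))) *
    (∏ e : Sym2 V, chi (e ∈ G.edgeSet ∧ (∀ v ∈ e, v ∈ s) ∧ onE g e)) = sgn G f g := by
  unfold sgn
  rw [← Finset.prod_mul_distrib, ← Finset.prod_mul_distrib, ← Finset.prod_mul_distrib]
  refine Finset.prod_congr rfl fun e _ => ?_
  rw [chi4]
  refine chi_congr ?_
  induction e using Sym2.ind with
  | _ x y =>
    by_cases hE : s(x, y) ∈ G.edgeSet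
    · simp only [hE, true_and, onE, ball_mem_mk, exists_mem_mk]
      by_cases hx : x ∈ s <;> by_cases hy : y ∈ s
      · simp only [hx, hy]
        tauto
      · have hgy : f y = g y := hc y hy
        simp only [hx, hy]
        cases hfx : f x <;> cases hfy : f y <;> cases hgx : g x <;> simp_all
      · have hgx : f x = g x := hc x hx
        simp only [hx, hy]
        cases hfx : f x <;> cases hfy : f y <;> cases hgy : g y <;> simp_all
      · have hgx : f x = g x := hc x hx
        have hgy : f y = g y := hc y hy
        simp only [hx, hy]
        cases hfx : f x <;> cases hfy : f y <;> simp_all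
    · simp only [hE, false_and]
      tauto

lemma diag_conj_apply (d : (V → Bool) → ℂ) (A : QMat V) (f g : V → Bool) :
    (Matrix.diagonal d * A * Matrix.diagonal d) f g = d f * A f g * d g := by
  rw [Matrix.mul_diagonal, Matrix.diagonal_mul]

lemma gs_apply (G : SimpleGraph V) (s : Finset V) (a : {v // v ∈ s} → Bool) :
    graphStateVec (inducedGraph G s) a =
      (-1 : ℂ) ^ (((Finset.univ : Finset (Sym2 {v // v ∈ s})).filter fun e =>
          e ∈ (inducedGraph G s).edgeSet ∧ ∀ v ∈ e, a v = true).card) *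
        ((Real.sqrt 2 : ℂ))⁻¹ ^ s.card := by
  simp [graphStateVec, czProd, plusVec, Matrix.mulVec_diagonal, Fintype.card_coe]

lemma conj_gs (G : SimpleGraph V) (s : Finset V) (a : {v // v ∈ s} → Bool) :
    (starRingEnd ℂ) (graphStateVec (inducedGraph G s) a) =
      graphStateVec (inducedGraph G s) a := by
  rw [gs_apply, _root_.map_mul, map_pow, map_pow, map_neg, _root_.map_one, map_inv₀, Complex.conj_ofReal]

lemma csq (s : Finset V) :
    ((Real.sqrt 2 : ℂ))⁻¹ ^ s.card * ((Real.sqrt 2 : ℂ))⁻¹ ^ s.card = (2 : ℂ)⁻¹ ^ s.card := by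
  rw [← mul_pow, ← mul_inv, ← Complex.ofReal_mul, Real.mul_self_sqrt (by norm_num)]
  norm_num

/-- `P(V',G) = U (|G'⟩⟨G'| ⊗ I) U` where `U` is the product of the
controlled-`Z` gates over the edges connecting `V'` with `V \ V'`. -/
theorem stabProj_eq_cz_conj_subgraph_projector (G : SimpleGraph V) (s : Finset V) :
    stabProj G s =
      czCut G s * embedOp s (outer (graphStateVec (inducedGraph G s))) * czCut G s := by
  unfold stabProj prodOn
  rw [prod_list_eq G s.toList s.nodup_toList]
  ext f g
  unfold czCut
  rw [diag_conj_apply]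
  unfold embedOp
  simp only [Matrix.of_apply]
  have hmemiff : (∀ v, v ∉ s.toList → f v = g v) ↔ (∀ v, v ∉ s → f v = g v) := by
    constructor <;> intro h v hv
    · exact h v (fun hm => hv (Finset.mem_toList.1 hm))
    · exact h v (fun hm => hv (Finset.mem_toList.2 hm))
  by_cases hc : ∀ v, v ∉ s → f v = g v
  · rw [if_pos (hmemiff.2 hc), if_pos hc, Finset.length_toList]
    unfold outer
    simp only [Matrix.of_apply]
    rw [conj_gs, gs_apply, gs_apply]
    rw [induced_pow_eq_prod, induced_pow_eq_prod]
    rw [neg_one_pow_filter, neg_one_pow_filter]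
    have e1 : ∀ h : V → Bool, (∏ e : Sym2 V, chi (e ∈ G.edgeSet ∧ (∀ v ∈ e, h v = true) ∧
        (∃ v ∈ e, v ∈ s) ∧ ∃ v ∈ e, v ∉ s)) =
        ∏ e : Sym2 V, chi (e ∈ G.edgeSet ∧ onE h e ∧ (∃ v ∈ e, v ∈ s) ∧ ∃ v ∈ e, v ∉ s) :=
      fun h => Finset.prod_congr rfl fun e _ => chi_congr Iff.rfl
    rw [e1 f, e1 g]
    rw [← sgn_split G s f g hc, ← csq s]
    ring
  · rw [if_neg (fun h => hc (hmemiff.1 h)), if_neg hc]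
    simp

end GraphStates
end
end

section
/- Refinement monotonicity of graph-state witnesses: if the partition Ṽ = {Ṽ_1,…,Ṽ_l} of V refines the partition 𝒱 = {V_1,…,V_k}, then W(Ṽ,G) − W(𝒱,G) is positive semidefinite, where W(𝒱,G) = (k − 1/2)I − ∑_{m=1}^k P(V_m,G). -/
open scoped Classical ComplexOrder
open Matrix

noncomputable section

namespace GraphStates

variable {V : Type} [Fintype V] [DecidableEq V]

/-! ### Auxiliary lemmas -/

/-- Sign helper: `(-1)^|{v ∈ s : g v}|`. -/
def sgnOn (s : Finset V) (g : V → Bool) : ℂ :=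
  (-1) ^ ((s.filter fun v => g v = true).card)

lemma star_sgnOn (s : Finset V) (g : V → Bool) : star (sgnOn s g) = sgnOn s g := by
  unfold sgnOn; rw [star_pow, star_neg, star_one]

lemma sgnOn_update (s : Finset V) (g : V → Bool) (j : V) :
    sgnOn s (Function.update g j (!g j)) = (if j ∈ s then -1 else 1) * sgnOn s g := by
  unfold sgnOn
  by_cases hj : j ∈ s
  · rw [if_pos hj]
    have hs : s = insert j (s.erase j) := (Finset.insert_erase hj).symm
    rw [hs, Finset.filter_insert, Finset.filter_insert]
    have her : ((s.erase j).filter fun v => Function.update g j (!g j) v = true)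
        = ((s.erase j).filter fun v => g v = true) := by
      apply Finset.filter_congr
      intro v hv
      rw [Function.update_of_ne (Finset.ne_of_mem_erase hv)]
    rw [her]
    have hjer : j ∉ ((s.erase j).filter fun v => g v = true) := by
      simp [Finset.mem_filter]
    rw [Function.update_self]
    cases hgj : g j <;>
      simp [hgj, Finset.card_insert_of_notMem hjer, pow_succ] <;> ring
  · rw [if_neg hj, one_mul]
    congr 2
    apply Finset.filter_congr
    intro v hv
    rw [Function.update_of_ne (by rintro rfl; exact hj hv)]

/-- neighborhood -/
def nbr (G : SimpleGraph V) (i : V) : Finset V := Finset.univ.filter fun j => G.Adj i j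

lemma stab_apply_s9 (G : SimpleGraph V) (i : V) (f g : V → Bool) :
    stab G i f g
      = (if f = Function.update g i (!g i) then 1 else 0) * sgnOn (nbr G i) g := by
  simp [stab, pauliX, zOn, nbr, sgnOn, Matrix.mul_diagonal]

lemma stab_mul_apply_s9 (G : SimpleGraph V) (i j : V) (f g : V → Bool) :
    (stab G i * stab G j) f g =
      (if f = Function.update (Function.update g j (!g j)) i
          (!(Function.update g j (!g j) i)) then 1 else 0) *
        (sgnOn (nbr G i) (Function.update g j (!g j)) * sgnOn (nbr G j) g) := by
  rw [Matrix.mul_apply]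
  rw [Finset.sum_eq_single (Function.update g j (!g j))]
  · rw [stab_apply_s9, stab_apply_s9, if_pos rfl]; ring
  · intro h _ hne
    rw [stab_apply_s9 G j, if_neg hne, zero_mul, mul_zero]
  · intro habs; exact absurd (Finset.mem_univ _) habs

lemma stab_comm (G : SimpleGraph V) (i j : V) : stab G i * stab G j = stab G j * stab G i := by
  by_cases hij : i = j
  · subst hij; rfl
  ext f g
  rw [stab_mul_apply_s9, stab_mul_apply_s9]
  have h1 : Function.update (Function.update g j (!g j)) i
        (!(Function.update g j (!g j) i))
      = Function.update (Function.update g i (!g i)) j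
        (!(Function.update g i (!g i) j)) := by
    rw [Function.update_of_ne hij, Function.update_of_ne (Ne.symm hij)]
    exact Function.update_comm (Ne.symm hij) _ _ g
  have hmem : j ∈ nbr G i ↔ i ∈ nbr G j := by simp [nbr, G.adj_comm]
  have h2 : sgnOn (nbr G i) (Function.update g j (!g j)) * sgnOn (nbr G j) g
      = sgnOn (nbr G j) (Function.update g i (!g i)) * sgnOn (nbr G i) g := by
    rw [sgnOn_update, sgnOn_update]
    by_cases h : j ∈ nbr G i
    · rw [if_pos h, if_pos (hmem.1 h)]; ring
    · rw [if_neg h, if_neg (fun hc => h (hmem.2 hc))]; ring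
  rw [h1, h2]

lemma stab_mul_self (G : SimpleGraph V) (i : V) : stab G i * stab G i = 1 := by
  ext f g
  rw [stab_mul_apply_s9]
  have h1 : Function.update (Function.update g i (!g i)) i
      (!(Function.update g i (!g i) i)) = g := by
    rw [Function.update_self, Function.update_idem, Bool.not_not, Function.update_eq_self]
  have h2 : i ∉ nbr G i := by simp [nbr]
  rw [h1, sgnOn_update, if_neg h2, one_mul]
  have h3 : sgnOn (nbr G i) g * sgnOn (nbr G i) g = 1 := by
    unfold sgnOn; rw [← mul_pow]; norm_num
  rw [h3, Matrix.one_apply]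
  simp

lemma stab_herm (G : SimpleGraph V) (i : V) : (stab G i)ᴴ = stab G i := by
  ext f g
  rw [Matrix.conjTranspose_apply, stab_apply_s9, stab_apply_s9, star_mul']
  rw [star_sgnOn]
  have hstar : star (if g = Function.update f i (!f i) then (1:ℂ) else 0)
      = (if g = Function.update f i (!f i) then (1:ℂ) else 0) := by
    split <;> simp
  rw [mul_comm, hstar]
  by_cases h : f = Function.update g i (!g i)
  · have h' : g = Function.update f i (!f i) := by
      subst h
      rw [Function.update_self, Function.update_idem, Bool.not_not, Function.update_eq_self]
    rw [if_pos h, if_pos h']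
    have : sgnOn (nbr G i) f = sgnOn (nbr G i) g := by
      subst h
      rw [sgnOn_update, if_neg (by simp [nbr] : i ∉ nbr G i), one_mul]
    rw [this, mul_comm]
  · have h' : ¬ g = Function.update f i (!f i) := by
      intro hg
      apply h
      subst hg
      rw [Function.update_self, Function.update_idem, Bool.not_not, Function.update_eq_self]
    rw [if_neg h, if_neg h', zero_mul, mul_zero]

lemma qcomm (G : SimpleGraph V) (v w : V) :
    Commute ((2:ℂ)⁻¹ • (1 + stab G v)) ((2:ℂ)⁻¹ • (1 + stab G w)) := by
  have h := stab_comm G v w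
  show _ = _
  rw [smul_mul_smul_comm, smul_mul_smul_comm]
  congr 1
  have e1 : (1 + stab G v) * (1 + stab G w) = 1 + stab G v + stab G w + stab G v * stab G w := by
    noncomm_ring
  have e2 : (1 + stab G w) * (1 + stab G v) = 1 + stab G w + stab G v + stab G w * stab G v := by
    noncomm_ring
  rw [e1, e2, h]
  abel

lemma qherm (G : SimpleGraph V) (v : V) :
    ((2:ℂ)⁻¹ • (1 + stab G v))ᴴ = (2:ℂ)⁻¹ • (1 + stab G v) := by
  rw [Matrix.conjTranspose_smul, Matrix.conjTranspose_add, Matrix.conjTranspose_one,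
    stab_herm]
  norm_num

lemma qidem (G : SimpleGraph V) (v : V) :
    ((2:ℂ)⁻¹ • (1 + stab G v)) * ((2:ℂ)⁻¹ • (1 + stab G v))
      = (2:ℂ)⁻¹ • (1 + stab G v) := by
  rw [smul_mul_smul_comm]
  have h : (1 + stab G v) * (1 + stab G v) = (2:ℂ) • (1 + stab G v) := by
    have e : (1 + stab G v) * (1 + stab G v)
        = 1 + stab G v + stab G v + stab G v * stab G v := by noncomm_ring
    rw [e, stab_mul_self]
    have : ((2:ℂ) • (1 + stab G v) : QMat V) = (1 + stab G v) + (1 + stab G v) := by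
      rw [two_smul]
    rw [this]
    abel
  rw [h, smul_smul]
  norm_num

lemma pairwise_commute_map {f : V → QMat V} (hf : ∀ v w, Commute (f v) (f w)) :
    ∀ l : List V, (l.map f).Pairwise Commute := by
  intro l
  induction l with
  | nil => simp
  | cons a t ih =>
    simp only [List.map_cons, List.pairwise_cons]
    refine ⟨?_, ih⟩
    intro b hb
    obtain ⟨w, _, rfl⟩ := List.mem_map.1 hb
    exact hf a w

lemma prodOn_empty (f : V → QMat V) : prodOn (∅ : Finset V) f = 1 := by
  simp [prodOn]

lemma prodOn_insert {f : V → QMat V} (hf : ∀ v w, Commute (f v) (f w))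
    {a : V} {s : Finset V} (ha : a ∉ s) :
    prodOn (insert a s) f = f a * prodOn s f := by
  unfold prodOn
  have hperm : ((insert a s).toList.map f).Perm ((a :: s.toList).map f) :=
    (Finset.toList_insert ha).map f
  rw [hperm.prod_eq' (pairwise_commute_map hf _)]
  simp

lemma commute_prodOn {f : V → QMat V} {A : QMat V} (h : ∀ v, Commute A (f v))
    (s : Finset V) : Commute A (prodOn s f) := by
  apply Commute.list_prod_right
  intro x hx
  obtain ⟨v, _, rfl⟩ := List.mem_map.1 hx
  exact h v

lemma prodOn_union {f : V → QMat V} (hf : ∀ v w, Commute (f v) (f w)) :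
    ∀ {s t : Finset V}, Disjoint s t → prodOn (s ∪ t) f = prodOn s f * prodOn t f := by
  intro s
  induction s using Finset.induction_on with
  | empty => intro t _; rw [Finset.empty_union, prodOn_empty, one_mul]
  | @insert a s ha ih =>
    intro t hdisj
    have hat : a ∉ t := fun h =>
      Finset.disjoint_left.1 hdisj (Finset.mem_insert_self a s) h
    have ha' : a ∉ s ∪ t := by
      simp only [Finset.mem_union]
      rintro (h | h)
      exacts [ha h, hat h]
    rw [Finset.insert_union, prodOn_insert hf ha', prodOn_insert hf ha,
      ih (Finset.disjoint_of_subset_left (Finset.subset_insert a s) hdisj), mul_assoc]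

lemma list_prod_herm : ∀ l : List (QMat V), (∀ A ∈ l, Aᴴ = A) →
    l.Pairwise Commute → l.prodᴴ = l.prod := by
  intro l
  induction l with
  | nil => simp
  | cons a t ih =>
    intro hh hp
    have hc : Commute a t.prod :=
      Commute.list_prod_right _ _ (fun x hx => (List.pairwise_cons.1 hp).1 x hx)
    rw [List.prod_cons, Matrix.conjTranspose_mul,
      ih (fun A hA => hh A (List.mem_cons_of_mem _ hA)) (List.Pairwise.of_cons hp),
      hh a (List.mem_cons_self)]
    exact hc.eq.symm

lemma list_prod_idem : ∀ l : List (QMat V), (∀ A ∈ l, A * A = A) →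
    l.Pairwise Commute → l.prod * l.prod = l.prod := by
  intro l
  induction l with
  | nil => simp
  | cons a t ih =>
    intro hh hp
    have hc : Commute a t.prod :=
      Commute.list_prod_right _ _ (fun x hx => (List.pairwise_cons.1 hp).1 x hx)
    rw [List.prod_cons, mul_assoc, ← mul_assoc t.prod a, ← hc.eq, mul_assoc,
      ih (fun A hA => hh A (List.mem_cons_of_mem _ hA)) (List.Pairwise.of_cons hp),
      ← mul_assoc, hh a (List.mem_cons_self)]

lemma stabProj_herm (G : SimpleGraph V) (s : Finset V) :
    (stabProj G s)ᴴ = stabProj G s := by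
  apply list_prod_herm
  · intro A hA
    obtain ⟨v, _, rfl⟩ := List.mem_map.1 hA
    exact qherm G v
  · exact pairwise_commute_map (qcomm G) _

lemma stabProj_idem (G : SimpleGraph V) (s : Finset V) :
    stabProj G s * stabProj G s = stabProj G s := by
  apply list_prod_idem
  · intro A hA
    obtain ⟨v, _, rfl⟩ := List.mem_map.1 hA
    exact qidem G v
  · exact pairwise_commute_map (qcomm G) _

lemma stabProj_commute (G : SimpleGraph V) (s t : Finset V) :
    Commute (stabProj G s) (stabProj G t) := by
  apply commute_prodOn
  intro v
  exact ((commute_prodOn (fun w => qcomm G v w) s).symm)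

lemma stabProj_union (G : SimpleGraph V) {s t : Finset V} (h : Disjoint s t) :
    stabProj G (s ∪ t) = stabProj G s * stabProj G t :=
  prodOn_union (qcomm G) h

lemma proj_pair_psd {P Q : QMat V} (hP : Pᴴ = P) (hQ : Qᴴ = Q)
    (hPi : P * P = P) (hQi : Q * Q = Q) (hc : P * Q = Q * P) :
    (1 + P * Q - P - Q).PosSemidef := by
  have hc' : (1 - Q) * (1 - P) = (1 - P) * (1 - Q) := by
    have e1 : (1 - Q) * (1 - P) = 1 - Q - P + Q * P := by noncomm_ring
    have e2 : (1 - P) * (1 - Q) = 1 - P - Q + P * Q := by noncomm_ring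
    rw [e1, e2, hc]; abel
  have hR : 1 + P * Q - P - Q = (1 - P) * (1 - Q) := by noncomm_ring
  have hherm : ((1 - P) * (1 - Q))ᴴ = (1 - P) * (1 - Q) := by
    rw [Matrix.conjTranspose_mul, Matrix.conjTranspose_sub, Matrix.conjTranspose_sub,
      Matrix.conjTranspose_one, hP, hQ, hc']
  have hPidem : (1 - P) * (1 - P) = 1 - P := by
    have e : (1 - P) * (1 - P) = 1 - P - P + P * P := by noncomm_ring
    rw [e, hPi]; abel
  have hQidem : (1 - Q) * (1 - Q) = 1 - Q := by
    have e : (1 - Q) * (1 - Q) = 1 - Q - Q + Q * Q := by noncomm_ring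
    rw [e, hQi]; abel
  have hidem : ((1 - P) * (1 - Q)) * ((1 - P) * (1 - Q)) = (1 - P) * (1 - Q) := by
    rw [mul_assoc, ← mul_assoc (1 - Q), hc', mul_assoc, hQidem, ← mul_assoc, hPidem]
  have hpsd := Matrix.posSemidef_conjTranspose_mul_self ((1 - P) * (1 - Q))
  rw [hherm, hidem] at hpsd
  rw [hR]
  exact hpsd

lemma key (G : SimpleGraph V) :
    ∀ (𝒮 : Finset (Finset V)) (hne : 𝒮.Nonempty),
      ((𝒮 : Set (Finset V)).Pairwise fun B C => Disjoint B C) →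
      (((𝒮.card : ℂ) - 1) • (1 : QMat V) + stabProj G (𝒮.sup id)
        - ∑ B ∈ 𝒮, stabProj G B).PosSemidef := by
  intro 𝒮 hne
  induction hne using Finset.Nonempty.cons_induction with
  | singleton B =>
    intro _
    simp only [Finset.card_singleton, Nat.cast_one, sub_self, zero_smul, zero_add,
      Finset.sup_singleton, id, Finset.sum_singleton]
    exact Matrix.PosSemidef.zero
  | cons B 𝒮 hB hne ih =>
    intro hdisj
    have hdisj' : (↑𝒮 : Set (Finset V)).Pairwise fun B C => Disjoint B C := by
      apply hdisj.mono
      rw [Finset.coe_cons]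
      exact Set.subset_insert _ _
    have hBT : Disjoint B (𝒮.sup id) := by
      rw [Finset.disjoint_sup_right]
      intro C hC
      exact hdisj (by simp) (by simp [hC]) (fun h => hB (h ▸ hC))
    have hsup : (Finset.cons B 𝒮 hB).sup id = B ∪ 𝒮.sup id := by
      rw [Finset.sup_cons, Finset.sup_eq_union]
      rfl
    rw [hsup, stabProj_union G hBT, Finset.sum_cons, Finset.card_cons]
    have hA := proj_pair_psd (stabProj_herm G B) (stabProj_herm G (𝒮.sup id))
      (stabProj_idem G B) (stabProj_idem G (𝒮.sup id))
      (stabProj_commute G B (𝒮.sup id)).eq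
    have IH := ih hdisj'
    have hsplit : (((𝒮.card + 1 : ℕ) : ℂ) - 1) • (1 : QMat V)
          + stabProj G B * stabProj G (𝒮.sup id)
          - (stabProj G B + ∑ C ∈ 𝒮, stabProj G C)
        = (1 + stabProj G B * stabProj G (𝒮.sup id) - stabProj G B - stabProj G (𝒮.sup id))
          + (((𝒮.card : ℂ) - 1) • (1 : QMat V) + stabProj G (𝒮.sup id)
            - ∑ C ∈ 𝒮, stabProj G C) := by
      push_cast
      module
    rw [hsplit]
    exact hA.add IH

/-- refinement monotonicity: if the partition `𝒲` of `V` refines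
the partition `𝒱`, then `W(𝒲,G) − W(𝒱,G)` is positive semidefinite. -/
theorem witness_refinement_posSemidef (G : SimpleGraph V) (𝒱 𝒲 : Finset (Finset V))
    (h𝒱 : IsPartitionOn Finset.univ 𝒱) (h𝒲 : IsPartitionOn Finset.univ 𝒲)
    (href : ∀ B ∈ 𝒲, ∃ C ∈ 𝒱, B ⊆ C) :
    (witnessW G 𝒲 - witnessW G 𝒱).PosSemidef := by
  classical
  obtain ⟨h𝒱ne, h𝒱disj, h𝒱sup⟩ := h𝒱
  obtain ⟨h𝒲ne, h𝒲disj, h𝒲sup⟩ := h𝒲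
  set fib : Finset V → Finset (Finset V) := fun C => 𝒲.filter fun B => B ⊆ C with hfibdef
  have hfibdisj : ∀ C ∈ 𝒱, ∀ C' ∈ 𝒱, C ≠ C' → Disjoint (fib C) (fib C') := by
    intro C hC C' hC' hne
    rw [Finset.disjoint_left]
    intro B hB hB'
    simp only [hfibdef, Finset.mem_filter] at hB hB'
    obtain ⟨v, hv⟩ := h𝒲ne B hB.1
    exact Finset.disjoint_left.1 (h𝒱disj hC hC' hne) (hB.2 hv) (hB'.2 hv)
  have hbiU : 𝒱.biUnion fib = 𝒲 := by
    apply Finset.Subset.antisymm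
    · intro B hB
      rw [Finset.mem_biUnion] at hB
      obtain ⟨C, _, hBC⟩ := hB
      exact (Finset.mem_filter.1 hBC).1
    · intro B hB
      obtain ⟨C, hC, hBC⟩ := href B hB
      exact Finset.mem_biUnion.2 ⟨C, hC, Finset.mem_filter.2 ⟨hB, hBC⟩⟩
  have hcard : 𝒲.card = ∑ C ∈ 𝒱, (fib C).card := by
    rw [← hbiU]
    exact Finset.card_biUnion hfibdisj
  have hsumP : ∑ B ∈ 𝒲, stabProj G B = ∑ C ∈ 𝒱, ∑ B ∈ fib C, stabProj G B := by
    rw [← hbiU]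
    exact Finset.sum_biUnion fun C hC C' hC' hne =>
      hfibdisj C (by exact_mod_cast hC) C' (by exact_mod_cast hC') hne
  have hmemB : ∀ v : V, ∀ C ∈ 𝒱, v ∈ C → ∃ B ∈ fib C, v ∈ B := by
    intro v C hC hv
    have hvuniv : v ∈ 𝒲.sup id := by rw [h𝒲sup]; exact Finset.mem_univ v
    obtain ⟨B, hB, hvB⟩ := Finset.mem_sup.1 hvuniv
    obtain ⟨C', hC', hBC'⟩ := href B hB
    have hCC' : C' = C := by
      by_contra hne
      exact Finset.disjoint_left.1 (h𝒱disj hC' hC hne) (hBC' hvB) hv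
    exact ⟨B, Finset.mem_filter.2 ⟨hB, hCC' ▸ hBC'⟩, hvB⟩
  have hsupfib : ∀ C ∈ 𝒱, (fib C).sup id = C := by
    intro C hC
    apply le_antisymm
    · exact Finset.sup_le fun B hB => (Finset.mem_filter.1 hB).2
    · intro v hv
      obtain ⟨B, hBf, hvB⟩ := hmemB v C hC hv
      exact Finset.mem_sup.2 ⟨B, hBf, hvB⟩
  have hfibne : ∀ C ∈ 𝒱, (fib C).Nonempty := by
    intro C hC
    obtain ⟨v, hv⟩ := h𝒱ne C hC
    obtain ⟨B, hBf, _⟩ := hmemB v C hC hv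
    exact ⟨B, hBf⟩
  have hkey : ∀ C ∈ 𝒱,
      ((((fib C).card : ℂ) - 1) • (1 : QMat V) + stabProj G C
        - ∑ B ∈ fib C, stabProj G B).PosSemidef := by
    intro C hC
    have hsub : (↑(fib C) : Set (Finset V)) ⊆ ↑𝒲 :=
      Finset.coe_subset.2 (Finset.filter_subset _ _)
    have := key G (fib C) (hfibne C hC) (h𝒲disj.mono hsub)
    rwa [hsupfib C hC] at this
  have hD : witnessW G 𝒲 - witnessW G 𝒱
      = ∑ C ∈ 𝒱, ((((fib C).card : ℂ) - 1) • (1 : QMat V) + stabProj G C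
          - ∑ B ∈ fib C, stabProj G B) := by
    unfold witnessW
    rw [hsumP, hcard, Finset.sum_sub_distrib, Finset.sum_add_distrib, ← Finset.sum_smul]
    have hsc : (∑ C ∈ 𝒱, (((fib C).card : ℂ) - 1))
        = (∑ C ∈ 𝒱, ((fib C).card : ℂ)) - (𝒱.card : ℂ) := by
      rw [Finset.sum_sub_distrib, Finset.sum_const]
      simp
    rw [hsc]
    push_cast
    module
  rw [hD]
  exact Finset.sum_induction _ _ (fun a b ha hb => ha.add hb) Matrix.PosSemidef.zero hkey


end GraphStates
end
end

section
/- For the witness W(𝒱,G) = (k − 1/2)I − ∑_{l=1}^k P(V_l,G) associated to a partition 𝒱 of V into k blocks, evaluated on ρ(p) = (1−p)|G⟩⟨G| + p I/2^n, the expectation is tr(W(𝒱,G)ρ(p)) = −1/2 + p·∑_{l=1}^k (1 − 2^{−|V_l|}); hence the white noise tolerance satisfies 1/(2k) < p_tol ≤ 1/k (assuming all |V_l| ≥ 1). -/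
open scoped Classical
open Matrix

noncomputable section

namespace GraphStates

variable {V : Type} [Fintype V] [DecidableEq V]

/-! ### Auxiliary lemmas -/

private lemma neg_one_pow_congr {a b : ℕ} (h : a % 2 = b % 2) :
    (-1 : ℂ) ^ a = (-1 : ℂ) ^ b := by
  conv_lhs => rw [← Nat.div_add_mod a 2]
  conv_rhs => rw [← Nat.div_add_mod b 2]
  rw [h, pow_add, pow_add, pow_mul, pow_mul, neg_one_sq, one_pow, one_pow]

/-- `M` is supported on the translation by `T` (in the group `(V → Bool)`). -/
def IsShift (T : V → Bool) (M : QMat V) : Prop :=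
  ∀ f g, M f g ≠ 0 → f = fun v => xor (T v) (g v)

lemma isShift_congr {T T' : V → Bool} {M : QMat V} (h : ∀ v, T v = T' v)
    (hM : IsShift T M) : IsShift T' M := by
  have : T = T' := funext h
  exact this ▸ hM

lemma isShift_diagonal (d : (V → Bool) → ℂ) :
    IsShift (fun _ => false) (Matrix.diagonal d) := by
  intro f g h
  have hfg : f = g := by
    by_contra hne
    exact h (Matrix.diagonal_apply_ne d hne)
  subst hfg
  funext v
  simp

lemma IsShift.mul {T T' : V → Bool} {M N : QMat V} (hM : IsShift T M)
    (hN : IsShift T' N) : IsShift (fun v => xor (T v) (T' v)) (M * N) := by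
  intro f g h
  rw [Matrix.mul_apply] at h
  obtain ⟨x, -, hx⟩ := Finset.exists_ne_zero_of_sum_ne_zero h
  have h1 := hM f x (left_ne_zero_of_mul hx)
  have h2 := hN x g (right_ne_zero_of_mul hx)
  subst h2
  rw [h1]
  funext v
  simp [Bool.xor_assoc]

lemma isShift_pauliX (i : V) : IsShift (fun v => decide (v = i)) (pauliX i) := by
  intro f g h
  have hf : f = Function.update g i (!g i) := by
    by_contra hne
    exact h (by simp [pauliX, hne])
  subst hf
  funext v
  by_cases hv : v = i
  · subst hv; simp
  · simp [Function.update_of_ne hv, hv]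

lemma isShift_stab (G : SimpleGraph V) (i : V) :
    IsShift (fun v => decide (v = i)) (stab G i) := by
  have := (isShift_pauliX (V := V) i).mul
    (isShift_diagonal (fun f => (-1 : ℂ) ^ (((Finset.univ.filter fun j => G.Adj i j).filter
      fun v => f v = true)).card))
  exact isShift_congr (fun v => by simp) this

lemma isShift_stabList (G : SimpleGraph V) :
    ∀ l : List V, l.Nodup → IsShift (fun v => decide (v ∈ l)) ((l.map (stab G)).prod) := by
  intro l
  induction l with
  | nil =>
    intro _
    simp only [List.map_nil, List.prod_nil]
    have h1 : IsShift (fun _ => false) (1 : QMat V) := by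
      rw [← Matrix.diagonal_one]; exact isShift_diagonal _
    exact isShift_congr (fun v => by simp) h1
  | cons a t ih =>
    intro hnd
    rw [List.nodup_cons] at hnd
    simp only [List.map_cons, List.prod_cons]
    refine isShift_congr (fun v => ?_) ((isShift_stab G a).mul (ih hnd.2))
    by_cases hva : v = a
    · subst hva; simp [hnd.1]
    · simp [hva]

lemma trace_eq_zero_of_isShift {T : V → Bool} {M : QMat V} (hM : IsShift T M)
    (hT : ∃ v, T v = true) : Matrix.trace M = 0 := by
  obtain ⟨v, hv⟩ := hT
  rw [Matrix.trace]
  apply Finset.sum_eq_zero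
  intro f _
  by_contra h
  have := congrFun (hM f f h) v
  rw [hv] at this
  simp at this

lemma trace_stabList (G : SimpleGraph V) (l : List V) (hnd : l.Nodup) (hne : l ≠ []) :
    Matrix.trace ((l.map (stab G)).prod) = 0 := by
  refine trace_eq_zero_of_isShift (isShift_stabList G l hnd) ?_
  obtain ⟨a, t, rfl⟩ := List.exists_cons_of_ne_nil hne
  exact ⟨a, by simp⟩

lemma trace_stab_mul_projList (G : SimpleGraph V) :
    ∀ (l m : List V), (m ++ l).Nodup → m ≠ [] →
      Matrix.trace ((m.map (stab G)).prod *
        (l.map fun v => (2 : ℂ)⁻¹ • (1 + stab G v)).prod) = 0 := by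
  intro l
  induction l with
  | nil =>
    intro m hm hne
    simp only [List.map_nil, List.prod_nil, mul_one]
    exact trace_stabList G m (by simpa using hm) hne
  | cons a t ih =>
    intro m hm hne
    have hexp : (m.map (stab G)).prod *
        (((a :: t).map fun v => (2 : ℂ)⁻¹ • (1 + stab G v)).prod)
        = (2 : ℂ)⁻¹ • ((m.map (stab G)).prod * ((t.map fun v => (2 : ℂ)⁻¹ • (1 + stab G v)).prod))
        + (2 : ℂ)⁻¹ • (((m ++ [a]).map (stab G)).prod *
            ((t.map fun v => (2 : ℂ)⁻¹ • (1 + stab G v)).prod)) := by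
      simp only [List.map_cons, List.prod_cons, List.map_append, List.prod_append,
        List.map_nil, List.prod_nil, List.map_singleton, mul_one]
      rw [smul_mul_assoc, mul_smul_comm, add_mul, one_mul, mul_add, smul_add, ← mul_assoc]
    rw [hexp, Matrix.trace_add, Matrix.trace_smul, Matrix.trace_smul]
    have h1 : (m ++ a :: t).Nodup := hm
    have h2 : ((m ++ [a]) ++ t).Nodup := by
      rw [List.append_assoc]
      simpa using h1
    rw [ih m (by
      have h3 := h1
      rw [List.nodup_append] at h3 ⊢
      exact ⟨h3.1, (List.nodup_cons.mp h3.2.1).2,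
        fun x hx y hy => h3.2.2 x hx y (List.mem_cons_of_mem _ hy)⟩) hne,
      ih (m ++ [a]) h2 (by simp)]
    simp

lemma trace_projList (G : SimpleGraph V) :
    ∀ l : List V, l.Nodup →
      Matrix.trace ((l.map fun v => (2 : ℂ)⁻¹ • (1 + stab G v)).prod)
        = 2 ^ Fintype.card V * (2 : ℂ)⁻¹ ^ l.length := by
  intro l
  induction l with
  | nil =>
    intro _
    simp [Matrix.trace_one]
  | cons a t ih =>
    intro hnd
    rw [List.nodup_cons] at hnd
    have hexp : (((a :: t).map fun v => (2 : ℂ)⁻¹ • (1 + stab G v)).prod)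
        = (2 : ℂ)⁻¹ • ((t.map fun v => (2 : ℂ)⁻¹ • (1 + stab G v)).prod)
        + (2 : ℂ)⁻¹ • (([a].map (stab G)).prod *
            ((t.map fun v => (2 : ℂ)⁻¹ • (1 + stab G v)).prod)) := by
      simp only [List.map_cons, List.prod_cons, List.map_nil, List.prod_nil, mul_one]
      rw [smul_mul_assoc, add_mul, one_mul, smul_add]
    rw [hexp, Matrix.trace_add, Matrix.trace_smul, Matrix.trace_smul,
      ih hnd.2, trace_stab_mul_projList G t [a] (by simp [hnd.1, hnd.2]) (by simp)]
    simp only [smul_eq_mul, mul_zero, add_zero, List.length_cons, pow_succ]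
    ring

lemma trace_stabProj (G : SimpleGraph V) (s : Finset V) :
    Matrix.trace (stabProj G s) = 2 ^ Fintype.card V * (2 : ℂ)⁻¹ ^ s.card := by
  rw [stabProj, prodOn, trace_projList G s.toList s.nodup_toList, Finset.length_toList]

/-! ### The graph state is stabilized -/

private lemma update_flip_iff (f g : V → Bool) (i : V) :
    f = Function.update g i (!g i) ↔ g = Function.update f i (!f i) := by
  constructor <;>
  · rintro rfl
    funext v
    by_cases hv : v = i
    · subst hv; simp
    · simp [Function.update_of_ne hv]

private lemma card_edges_through (G : SimpleGraph V) (i : V) (h : V → Bool) :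
    (Finset.univ.filter fun e : Sym2 V =>
        (e ∈ G.edgeSet ∧ ∀ v ∈ e, h v = true) ∧ i ∈ e).card
      = if h i = true then (Finset.univ.filter fun j => G.Adj i j ∧ h j = true).card else 0 := by
  by_cases hi : h i = true
  · rw [if_pos hi]
    refine (Finset.card_bij (fun j _ => s(i, j)) ?_ ?_ ?_).symm
    · intro j hj
      simp only [Finset.mem_filter, Finset.mem_univ, true_and] at hj ⊢
      refine ⟨⟨(G.mem_edgeSet).2 hj.1, ?_⟩, Sym2.mem_mk_left i j⟩
      intro v hv
      rcases Sym2.mem_iff.mp hv with rfl | rfl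
      · exact hi
      · exact hj.2
    · intro j hj j' hj' he
      exact Sym2.congr_right.mp he
    · intro e he
      simp only [Finset.mem_filter, Finset.mem_univ, true_and] at he
      obtain ⟨⟨hes, hall⟩, hie⟩ := he
      refine ⟨Sym2.Mem.other' hie, ?_, Sym2.other_spec' hie⟩
      simp only [Finset.mem_filter, Finset.mem_univ, true_and]
      constructor
      · rw [← SimpleGraph.mem_edgeSet, Sym2.other_spec' hie]
        exact hes
      · exact hall _ (Sym2.other_mem' hie)
  · rw [if_neg hi]
    rw [Finset.card_eq_zero, Finset.filter_eq_empty_iff]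
    rintro e -
    rintro ⟨⟨-, hall⟩, hie⟩
    exact hi (hall i hie)

private lemma key_parity (G : SimpleGraph V) (i : V) (f : V → Bool) :
    ((((Finset.univ.filter fun j => G.Adj i j).filter
        fun v => Function.update f i (!f i) v = true).card
      + (Finset.univ.filter fun e : Sym2 V =>
          e ∈ G.edgeSet ∧ ∀ v ∈ e, Function.update f i (!f i) v = true).card) % 2)
    = (Finset.univ.filter fun e : Sym2 V =>
        e ∈ G.edgeSet ∧ ∀ v ∈ e, f v = true).card % 2 := by
  set g := Function.update f i (!f i) with hg
  -- the Z-exponent equals D := #{j | i~j ∧ f j}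
  have hgf : ∀ v, v ≠ i → g v = f v := fun v hv => Function.update_of_ne hv _ _
  have hD : ((Finset.univ.filter fun j => G.Adj i j).filter fun v => g v = true).card
      = (Finset.univ.filter fun j => G.Adj i j ∧ f j = true).card := by
    rw [Finset.filter_filter]
    congr 1
    apply Finset.filter_congr
    intro j _
    exact and_congr_right fun hadj => by rw [hgf j hadj.ne']
  -- split the edge count by whether `i ∈ e`
  have hsplit : ∀ h : V → Bool,
      (Finset.univ.filter fun e : Sym2 V => e ∈ G.edgeSet ∧ ∀ v ∈ e, h v = true).card
      = (Finset.univ.filter fun e : Sym2 V =>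
          (e ∈ G.edgeSet ∧ ∀ v ∈ e, h v = true) ∧ i ∈ e).card
        + (Finset.univ.filter fun e : Sym2 V =>
          (e ∈ G.edgeSet ∧ ∀ v ∈ e, h v = true) ∧ i ∉ e).card := by
    intro h
    have := Finset.card_filter_add_card_filter_not
      (s := Finset.univ.filter fun e : Sym2 V => e ∈ G.edgeSet ∧ ∀ v ∈ e, h v = true)
      (p := fun e => i ∈ e)
    rw [Finset.filter_filter, Finset.filter_filter] at this
    omega
  -- edges avoiding `i` are counted identically for `f` and `g`
  have hB : (Finset.univ.filter fun e : Sym2 V =>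
        (e ∈ G.edgeSet ∧ ∀ v ∈ e, g v = true) ∧ i ∉ e)
      = (Finset.univ.filter fun e : Sym2 V =>
        (e ∈ G.edgeSet ∧ ∀ v ∈ e, f v = true) ∧ i ∉ e) := by
    apply Finset.filter_congr
    intro e _
    constructor
    · rintro ⟨⟨hes, hall⟩, hni⟩
      exact ⟨⟨hes, fun v hv => by rw [← hgf v (fun hvi => hni (hvi ▸ hv))]; exact hall v hv⟩, hni⟩
    · rintro ⟨⟨hes, hall⟩, hni⟩
      exact ⟨⟨hes, fun v hv => by rw [hgf v (fun hvi => hni (hvi ▸ hv))]; exact hall v hv⟩, hni⟩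
  have hAf := card_edges_through G i f
  have hAg := card_edges_through G i g
  have hgi : g i = !f i := Function.update_self i (!f i) f
  have hDg : (Finset.univ.filter fun j => G.Adj i j ∧ g j = true).card
      = (Finset.univ.filter fun j => G.Adj i j ∧ f j = true).card := by
    congr 1
    apply Finset.filter_congr
    intro j _
    exact and_congr_right fun hadj => by rw [hgf j hadj.ne']
  rw [hsplit f, hsplit g, hB, hD, hAf, hAg, hgi, hDg]
  by_cases hfi : f i = true <;> simp [hfi] <;> omega

lemma graphStateVec_apply (G : SimpleGraph V) (f : V → Bool) :
    graphStateVec G f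
      = (-1 : ℂ) ^ ((Finset.univ : Finset (Sym2 V)).filter fun e =>
          e ∈ G.edgeSet ∧ ∀ v ∈ e, f v = true).card * ((Real.sqrt 2 : ℂ))⁻¹ ^ Fintype.card V :=
  Matrix.mulVec_diagonal _ _ _

lemma stab_mulVec_graphState (G : SimpleGraph V) (i : V) :
    stab G i *ᵥ graphStateVec G = graphStateVec G := by
  funext f
  have hentry : ∀ g, stab G i f g
      = (if g = Function.update f i (!f i) then (1 : ℂ) else 0)
        * (-1 : ℂ) ^ (((Finset.univ.filter fun j => G.Adj i j).filter
            fun v => g v = true)).card := by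
    intro g
    rw [stab, zOn, Matrix.mul_diagonal]
    congr 1
    show (if f = Function.update g i (!g i) then (1 : ℂ) else 0) = _
    rw [if_congr (update_flip_iff f g i) rfl rfl]
  show (∑ g, stab G i f g * graphStateVec G g) = graphStateVec G f
  have : ∀ g, stab G i f g * graphStateVec G g
      = if g = Function.update f i (!f i)
          then (-1 : ℂ) ^ (((Finset.univ.filter fun j => G.Adj i j).filter
            fun v => g v = true)).card * graphStateVec G g
          else 0 := by
    intro g
    rw [hentry g]
    by_cases hgg : g = Function.update f i (!f i) <;> simp [hgg]
  rw [Finset.sum_congr rfl fun g _ => this g, Finset.sum_ite_eq' Finset.univ]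
  rw [if_pos (Finset.mem_univ _)]
  rw [graphStateVec_apply, graphStateVec_apply, ← mul_assoc, ← pow_add]
  congr 1
  exact neg_one_pow_congr (key_parity G i f)

lemma projList_mulVec_graphState (G : SimpleGraph V) :
    ∀ l : List V,
      ((l.map fun v => (2 : ℂ)⁻¹ • (1 + stab G v)).prod) *ᵥ graphStateVec G
        = graphStateVec G := by
  intro l
  induction l with
  | nil => simp [Matrix.one_mulVec]
  | cons a t ih =>
    simp only [List.map_cons, List.prod_cons]
    rw [← Matrix.mulVec_mulVec, ih, Matrix.smul_mulVec, Matrix.add_mulVec,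
      Matrix.one_mulVec, stab_mulVec_graphState]
    funext x
    simp only [Pi.smul_apply, Pi.add_apply, smul_eq_mul]
    ring

lemma stabProj_mulVec_graphState (G : SimpleGraph V) (s : Finset V) :
    stabProj G s *ᵥ graphStateVec G = graphStateVec G := by
  rw [stabProj, prodOn]
  exact projList_mulVec_graphState G s.toList

/-! ### Normalization -/

lemma gs_mul_star (G : SimpleGraph V) (f : V → Bool) :
    graphStateVec G f * star (graphStateVec G f) = ((2 : ℂ)⁻¹) ^ Fintype.card V := by
  rw [graphStateVec_apply]
  have h2 : ((Real.sqrt 2 : ℝ) : ℂ) ^ 2 = 2 := by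
    rw [← Complex.ofReal_pow, Real.sq_sqrt (by norm_num : (0:ℝ) ≤ 2)]
    norm_num
  set k := ((Finset.univ : Finset (Sym2 V)).filter fun e =>
      e ∈ G.edgeSet ∧ ∀ v ∈ e, f v = true).card
  set n := Fintype.card V
  have hstar : star ((-1 : ℂ) ^ k * ((Real.sqrt 2 : ℂ))⁻¹ ^ n)
      = (-1 : ℂ) ^ k * ((Real.sqrt 2 : ℂ))⁻¹ ^ n := by
    simp [star_pow, ← Complex.ofReal_inv]
  rw [hstar]
  have : ((-1 : ℂ) ^ k * ((Real.sqrt 2 : ℂ))⁻¹ ^ n) * ((-1 : ℂ) ^ k * ((Real.sqrt 2 : ℂ))⁻¹ ^ n)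
      = ((-1 : ℂ) ^ k) ^ 2 * (((Real.sqrt 2 : ℂ))⁻¹ ^ 2) ^ n := by ring
  rw [this, ← pow_mul, mul_comm k 2, pow_mul, neg_one_sq, one_pow, one_mul, inv_pow, h2]

lemma trace_outer (M : QMat V) (v : (V → Bool) → ℂ) :
    Matrix.trace (M * outer v) = ∑ f, (M *ᵥ v) f * star (v f) := by
  simp only [Matrix.trace, Matrix.diag, Matrix.mul_apply, outer, Matrix.of_apply,
    Matrix.mulVec, dotProduct, Finset.sum_mul]
  refine Finset.sum_congr rfl fun f _ => Finset.sum_congr rfl fun g _ => by simp only [Complex.star_def]; ring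

lemma sum_gs_star (G : SimpleGraph V) :
    (∑ f, graphStateVec G f * star (graphStateVec G f)) = 1 := by
  rw [Finset.sum_congr rfl fun f _ => gs_mul_star G f, Finset.sum_const]
  simp only [Finset.card_univ, nsmul_eq_mul]
  rw [Fintype.card_fun]
  simp only [Fintype.card_bool]
  rw [Nat.cast_pow, Nat.cast_ofNat, ← mul_pow]
  norm_num

lemma trace_outer_gs (G : SimpleGraph V) :
    Matrix.trace (outer (graphStateVec G)) = 1 := by
  have := trace_outer (1 : QMat V) (graphStateVec G)
  rw [one_mul, Matrix.one_mulVec] at this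
  rw [this, sum_gs_star]

lemma trace_stabProj_outer_gs (G : SimpleGraph V) (s : Finset V) :
    Matrix.trace (stabProj G s * outer (graphStateVec G)) = 1 := by
  rw [trace_outer, stabProj_mulVec_graphState, sum_gs_star]

/-- for the witness `W(𝒱,G)` of a partition `𝒱` of `V` into `k` blocks,
`tr(W(𝒱,G) ρ(p)) = −1/2 + p ∑_l (1 − 2^{−|V_l|})`, and hence the white noise tolerance
`p_tol = (1/2)/∑_l (1 − 2^{−|V_l|})` satisfies `1/(2k) < p_tol ≤ 1/k`. -/
theorem partition_witness_white_noise (G : SimpleGraph V) (𝒱 : Finset (Finset V))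
    (h𝒱 : IsPartitionOn Finset.univ 𝒱) (hk : 1 ≤ 𝒱.card) (p : ℝ) :
    Matrix.trace (witnessW G 𝒱 * whiteNoise (outer (graphStateVec G)) p) =
      (((-1 / 2 + p * ∑ B ∈ 𝒱, (1 - ((2 : ℝ) ^ B.card)⁻¹)) : ℝ) : ℂ) ∧
    1 / (2 * (𝒱.card : ℝ)) <
      (1 / 2) / (∑ B ∈ 𝒱, (1 - ((2 : ℝ) ^ B.card)⁻¹)) ∧
    (1 / 2) / (∑ B ∈ 𝒱, (1 - ((2 : ℝ) ^ B.card)⁻¹)) ≤ 1 / (𝒱.card : ℝ) := by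
  have hk' : (1 : ℝ) ≤ (𝒱.card : ℝ) := by exact_mod_cast hk
  have h𝒱ne : 𝒱.Nonempty := Finset.card_pos.mp (by omega)
  have h2n : (2 : ℂ) ^ Fintype.card V ≠ 0 := pow_ne_zero _ two_ne_zero
  have htr1 : (Matrix.trace (1 : QMat V)) = (2 : ℂ) ^ Fintype.card V := by
    rw [Matrix.trace_one]
    simp [Fintype.card_fun]
  refine ⟨?_, ?_, ?_⟩
  · rw [witnessW, whiteNoise]
    simp only [mul_add, sub_mul, smul_mul_assoc, mul_smul_comm, Finset.sum_mul, one_mul,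
      mul_one, Matrix.trace_add, Matrix.trace_sub, Matrix.trace_smul, Matrix.trace_sum,
      smul_eq_mul, trace_stabProj_outer_gs, trace_stabProj, trace_outer_gs, htr1]
    push_cast
    simp only [inv_pow, Finset.sum_const, nsmul_eq_mul, mul_one, Finset.sum_sub_distrib,
      ← Finset.mul_sum]
    set S := ∑ B ∈ 𝒱, ((2 : ℂ) ^ B.card)⁻¹ with hS
    field_simp
    ring
  all_goals {
    have hterm : ∀ B ∈ 𝒱, (1 / 2 : ℝ) ≤ 1 - ((2 : ℝ) ^ B.card)⁻¹ := by
      intro B hB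
      have hc : B.card ≠ 0 := Finset.card_ne_zero.mpr (h𝒱.1 B hB)
      have h2 : (2 : ℝ) ≤ 2 ^ B.card := le_self_pow₀ one_le_two hc
      have hpos : (0 : ℝ) < 2 ^ B.card := by positivity
      have hinv : ((2 : ℝ) ^ B.card)⁻¹ ≤ 2⁻¹ := by
        rw [inv_le_inv₀ hpos two_pos]
        exact h2
      rw [one_div]
      linarith
    have htlt : ∀ B ∈ 𝒱, 1 - ((2 : ℝ) ^ B.card)⁻¹ < 1 := by
      intro B hB
      have hpos : (0 : ℝ) < ((2 : ℝ) ^ B.card)⁻¹ := by positivity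
      linarith
    have hSge : (𝒱.card : ℝ) / 2 ≤ ∑ B ∈ 𝒱, (1 - ((2 : ℝ) ^ B.card)⁻¹) := by
      calc (𝒱.card : ℝ) / 2 = ∑ _B ∈ 𝒱, (1 / 2 : ℝ) := by
            rw [Finset.sum_const, nsmul_eq_mul]; ring
        _ ≤ _ := Finset.sum_le_sum hterm
    have hSlt : (∑ B ∈ 𝒱, (1 - ((2 : ℝ) ^ B.card)⁻¹)) < (𝒱.card : ℝ) := by
      calc (∑ B ∈ 𝒱, (1 - ((2 : ℝ) ^ B.card)⁻¹)) < ∑ _B ∈ 𝒱, (1 : ℝ) :=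
            Finset.sum_lt_sum_of_nonempty h𝒱ne htlt
        _ = (𝒱.card : ℝ) := by rw [Finset.sum_const, nsmul_eq_mul, mul_one]
    have hSpos : 0 < ∑ B ∈ 𝒱, (1 - ((2 : ℝ) ^ B.card)⁻¹) := by
      refine lt_of_lt_of_le ?_ hSge
      linarith
    first
    | (rw [div_lt_div_iff₀ (by linarith) hSpos]; linarith)
    | (rw [div_le_div_iff₀ hSpos (by linarith)]; linarith) }

end GraphStates
end
end
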